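/- Let A be a Poincaré duality algebra of dimension n over a field 𝕜 which is graded-commutative (a·b = (−1)^{(deg a)(deg b)} b·a for homogeneous a, b), with homogeneous basis {a_i} and dual basis {a_i^∨}. Then for every homogeneous a ∈ A of degree p, the identity (a ⊗ 1)·Δ_A = (1 ⊗ a)·Δ_A holds in the graded tensor product; explicitly, Σ_i (−1)^{deg a_i} (a·a_i) ⊗ a_i^∨ = Σ_i (−1)^{(deg a_i)(1+p)} a_i ⊗ (a·a_i^∨) in A ⊗_𝕜 A. -/

import Mathlib

open TensorProduct

/-- Let `A` be a graded-commutative Poincaré duality algebra of dimension `n` over a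
field `𝕜`, with homogeneous basis `{a_i}` and dual basis `{a_i^∨}`.  Then for every
homogeneous `a ∈ A` of degree `p` one has `(a ⊗ 1) · Δ_A = (1 ⊗ a) · Δ_A`, explicitly
`Σ_i (-1)^{deg a_i} (a·a_i) ⊗ a_i^∨ = Σ_i (-1)^{deg a_i (1 + p)} a_i ⊗ (a·a_i^∨)`. -/
theorem diagonal_element_swap
    {𝕜 : Type*} [Field 𝕜] {A : Type*} [Ring A] [Algebra 𝕜 A]
    [FiniteDimensional 𝕜 A]
    (𝒜 : ℕ → Submodule 𝕜 A) [GradedAlgebra 𝒜] (n : ℕ)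
    -- graded commutativity
    (hcomm : ∀ p q, ∀ x ∈ 𝒜 p, ∀ y ∈ 𝒜 q, x * y = ((-1 : 𝕜) ^ (p * q)) • (y * x))
    (ε : A →ₗ[𝕜] 𝕜)
    -- ε is supported in degree n
    (hsupp : ∀ p, p ≠ n → ∀ x ∈ 𝒜 p, ε x = 0)
    -- the pairing `A^p × A^{n-p} → 𝕜` is nondegenerate on the left and on the right
    (hndl : ∀ p, ∀ x ∈ 𝒜 p, x ≠ 0 → ∃ q, p + q = n ∧ ∃ y ∈ 𝒜 q, ε (x * y) ≠ 0)
    (hndr : ∀ q, ∀ y ∈ 𝒜 q, y ≠ 0 → ∃ p, p + q = n ∧ ∃ x ∈ 𝒜 p, ε (x * y) ≠ 0)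
    -- a homogeneous basis `a` with degrees `da` and dual basis `a'`
    {ι : Type*} [Fintype ι] [DecidableEq ι] (a : Module.Basis ι 𝕜 A) (da : ι → ℕ)
    (ha : ∀ i, a i ∈ 𝒜 (da i))
    (a' : ι → A) (hdual_a : ∀ i j, ε (a i * a' j) = if i = j then 1 else 0)
    -- a homogeneous element `x` of degree `p`
    (x : A) (p : ℕ) (hx : x ∈ 𝒜 p) :
    ∑ i, ((-1 : 𝕜) ^ da i) • ((x * a i) ⊗ₜ[𝕜] a' i)
      = ∑ i, ((-1 : 𝕜) ^ (da i * (1 + p))) • (a i ⊗ₜ[𝕜] (x * a' i)) := by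
  classical
  rcases isEmpty_or_nonempty ι with hι | hι
  · simp
  have lem1 : ∀ {pp q : ℕ} {u v : A}, u ∈ 𝒜 pp → v ∈ 𝒜 q → pp + q ≠ n → ε (u * v) = 0 :=
    fun hu hv hne => hsupp _ hne _ (SetLike.mul_mem_graded hu hv)
  -- pairing with a basis dual element reads off coordinates
  have pair_repr : ∀ (z : A) (k : ι), ε (z * a' k) = a.repr z k := by
    intro z k
    conv_lhs => rw [← a.sum_repr z]
    rw [Finset.sum_mul, map_sum, Finset.sum_eq_single k]
    · rw [smul_mul_assoc, map_smul, hdual_a, if_pos rfl, smul_eq_mul, mul_one]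
    · intro j _ hj
      rw [smul_mul_assoc, map_smul, hdual_a, if_neg hj, smul_eq_mul, mul_zero]
    · intro h; exact absurd (Finset.mem_univ k) h
  have expand_a : ∀ z : A, z = ∑ k, ε (z * a' k) • a k := by
    intro z
    conv_lhs => rw [← a.sum_repr z]
    exact Finset.sum_congr rfl fun k _ => by rw [pair_repr]
  -- decomposition of the pairing
  have pair_decomp : ∀ (j : ι) (z : A),
      ε (a j * z) = ∑ m ∈ (DirectSum.decompose 𝒜 z).support,
        ε (a j * (DirectSum.decompose 𝒜 z m : A)) := by
    intro j z
    conv_lhs => rw [← DirectSum.sum_support_decompose 𝒜 z]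
    rw [Finset.mul_sum, map_sum]
  have hcomp : ∀ (j k : ι) (m : ℕ), da j + m = n →
      ε (a j * (DirectSum.decompose 𝒜 (a' k) m : A)) = if j = k then 1 else 0 := by
    intro j k m hm
    have h1 : ε (a j * (DirectSum.decompose 𝒜 (a' k) m : A))
        = ∑ m' ∈ (DirectSum.decompose 𝒜 (a' k)).support,
            ε (a j * (DirectSum.decompose 𝒜 (a' k) m' : A)) := by
      refine (Finset.sum_eq_single (f := fun m' => ε (a j * (DirectSum.decompose 𝒜 (a' k) m' : A))) m ?_ ?_).symm
      · intro m' _ hm'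
        show ε (a j * (DirectSum.decompose 𝒜 (a' k) m' : A)) = 0
        exact lem1 (ha j) (SetLike.coe_mem _) (by omega)
      · intro hnot
        have hz : DirectSum.decompose 𝒜 (a' k) m = 0 := by
          by_contra hz
          exact hnot (DFinsupp.mem_support_iff.mpr hz)
        show ε (a j * (DirectSum.decompose 𝒜 (a' k) m : A)) = 0
        rw [hz, ZeroMemClass.coe_zero, mul_zero, map_zero]
    rw [h1, ← pair_decomp, hdual_a]
  -- components of a' k in wrong degrees vanish
  have hcomp_zero : ∀ (k : ι) (m : ℕ), m + da k ≠ n →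
      (DirectSum.decompose 𝒜 (a' k) m : A) = 0 := by
    intro k m hm
    by_contra hne
    obtain ⟨p', hp', w, hw, hεne⟩ :=
      hndr m _ (SetLike.coe_mem (DirectSum.decompose 𝒜 (a' k) m)) hne
    apply hεne
    have hw' : ε (w * (DirectSum.decompose 𝒜 (a' k) m : A))
        = ∑ j, a.repr w j * ε (a j * (DirectSum.decompose 𝒜 (a' k) m : A)) := by
      conv_lhs => rw [← a.sum_repr w]
      rw [Finset.sum_mul, map_sum]
      exact Finset.sum_congr rfl fun j _ => by rw [smul_mul_assoc, map_smul, smul_eq_mul]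
    rw [hw']
    refine Finset.sum_eq_zero fun j _ => ?_
    by_cases hj : da j + m = n
    · rw [hcomp j k m hj, if_neg, mul_zero]
      intro h; subst h; omega
    · rw [lem1 (ha j) (SetLike.coe_mem _) hj, mul_zero]
  -- the dual family is homogeneous
  have ha'mem : ∀ k, ∃ m, m + da k = n ∧ a' k ∈ 𝒜 m := by
    intro k
    have h1 : ε (a k * a' k) = 1 := by rw [hdual_a, if_pos rfl]
    rw [pair_decomp] at h1
    have h2 : ∃ m ∈ (DirectSum.decompose 𝒜 (a' k)).support,
        ε (a k * (DirectSum.decompose 𝒜 (a' k) m : A)) ≠ 0 := by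
      refine Finset.exists_ne_zero_of_sum_ne_zero ?_
      rw [h1]; exact one_ne_zero
    obtain ⟨m, hmsupp, hεm⟩ := h2
    have hm : m + da k = n := by
      by_contra h
      exact hεm (lem1 (ha k) (SetLike.coe_mem _) (by omega))
    refine ⟨m, hm, ?_⟩
    rw [← DirectSum.sum_support_decompose 𝒜 (a' k)]
    refine Submodule.sum_mem _ fun m' _ => ?_
    by_cases hm' : m' = m
    · subst hm'; exact SetLike.coe_mem _
    · rw [hcomp_zero k m' (by omega)]; exact zero_mem _
  -- the dual family is a basis
  have hcard : Fintype.card ι = Module.finrank 𝕜 A := (Module.finrank_eq_card_basis a).symm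
  have hli : LinearIndependent 𝕜 a' := by
    rw [Fintype.linearIndependent_iff]
    intro g hg j
    have h0 : ε (a j * ∑ i, g i • a' i) = g j := by
      rw [Finset.mul_sum, map_sum, Finset.sum_eq_single j]
      · rw [mul_smul_comm, map_smul, hdual_a, if_pos rfl, smul_eq_mul, mul_one]
      · intro k _ hk
        rw [mul_smul_comm, map_smul, hdual_a, if_neg (fun h => hk h.symm), smul_eq_mul, mul_zero]
      · intro h; exact absurd (Finset.mem_univ j) h
    rw [hg] at h0
    simpa using h0.symm
  obtain ⟨b, hb⟩ : ∃ b : Module.Basis ι 𝕜 A, ∀ k, b k = a' k :=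
    ⟨basisOfLinearIndependentOfCardEqFinrank hli hcard,
      fun k => congrFun (coe_basisOfLinearIndependentOfCardEqFinrank hli hcard) k⟩
  have pair_repr' : ∀ (z : A) (j : ι), ε (a j * z) = b.repr z j := by
    intro z j
    conv_lhs => rw [← b.sum_repr z]
    rw [Finset.mul_sum, map_sum, Finset.sum_eq_single j]
    · rw [mul_smul_comm, map_smul, hb, hdual_a, if_pos rfl, smul_eq_mul, mul_one]
    · intro k _ hk
      rw [mul_smul_comm, map_smul, hb, hdual_a, if_neg (fun h => hk h.symm), smul_eq_mul, mul_zero]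
    · intro h; exact absurd (Finset.mem_univ j) h
  have expand_a' : ∀ z : A, z = ∑ k, ε (a k * z) • a' k := by
    intro z
    conv_lhs => rw [← b.sum_repr z]
    exact Finset.sum_congr rfl fun k _ => by rw [pair_repr', hb]
  -- the key coefficient identity
  have key : ∀ i k, ((-1 : 𝕜) ^ da i) * ε ((x * a i) * a' k)
      = ((-1 : 𝕜) ^ (da k * (1 + p))) * ε ((a i * x) * a' k) := by
    intro i k
    have hxc : x * a i = ((-1 : 𝕜) ^ (p * da i)) • (a i * x) := hcomm p (da i) x hx (a i) (ha i)
    rw [hxc, smul_mul_assoc, map_smul, smul_eq_mul]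
    by_cases hE : ε ((a i * x) * a' k) = 0
    · rw [hE]; ring
    · obtain ⟨m, hm, hmem⟩ := ha'mem k
      have hdeg : (da i + p) + m = n := by
        by_contra h
        exact hE (lem1 (SetLike.mul_mem_graded (ha i) hx) hmem h)
      have hk : da k = da i + p := by omega
      rw [hk, ← mul_assoc, ← pow_add]
      congr 1
      obtain ⟨c, hc⟩ := Nat.even_mul_succ_self p
      have he : (da i + p) * (1 + p) = (da i + p * da i) + (c + c) := by
        rw [← hc]; ring
      conv_rhs => rw [he, pow_add]
      rw [Even.neg_one_pow ⟨c, rfl⟩, mul_one]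
  -- main computation
  calc ∑ i, ((-1 : 𝕜) ^ da i) • ((x * a i) ⊗ₜ[𝕜] a' i)
      = ∑ i, ∑ k, (((-1 : 𝕜) ^ da i) * ε ((x * a i) * a' k)) • (a k ⊗ₜ[𝕜] a' i) := by
        refine Finset.sum_congr rfl fun i _ => ?_
        conv_lhs => rw [expand_a (x * a i)]
        rw [TensorProduct.sum_tmul, Finset.smul_sum]
        refine Finset.sum_congr rfl fun k _ => ?_
        rw [TensorProduct.smul_tmul', smul_smul, TensorProduct.smul_tmul']
    _ = ∑ i, ∑ k, (((-1 : 𝕜) ^ (da k * (1 + p))) * ε ((a i * x) * a' k)) • (a k ⊗ₜ[𝕜] a' i) :=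
        Finset.sum_congr rfl fun i _ => Finset.sum_congr rfl fun k _ => by rw [key]
    _ = ∑ k, ∑ i, (((-1 : 𝕜) ^ (da k * (1 + p))) * ε ((a i * x) * a' k)) • (a k ⊗ₜ[𝕜] a' i) :=
        Finset.sum_comm
    _ = ∑ k, ((-1 : 𝕜) ^ (da k * (1 + p))) • (a k ⊗ₜ[𝕜] (x * a' k)) := by
        refine Finset.sum_congr rfl fun k _ => ?_
        conv_rhs => rw [expand_a' (x * a' k)]
        rw [TensorProduct.tmul_sum, Finset.smul_sum]
        refine Finset.sum_congr rfl fun i _ => ?_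
        rw [TensorProduct.tmul_smul, smul_smul, mul_assoc]
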